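/- arXiv:2001.00494 — 3 statements merged into one kernel-verified Lean document; each statement's English description precedes it below -/
import Mathlib

section
/- In Pic′ define the symmetry roots α₀ = H_p−E₁−E₂, α₁ = H_q−E₅−E₆, α₂ = H_p−E₃−E₄, α₃ = H_q−E₇−E₈, δ = α₀+α₁+α₂+α₃, the reflections w_i(C) = C + (C•α_i)α_i for i = 0,1,2,3, and the lattice automorphisms σ₁ = π₁ ∘ w_ρ where ρ = H_q−H_p, w_ρ(C) = C + (C•ρ)ρ, and π₁ is the basis permutation exchanging E₁↔E₇, E₂↔E₈, E₃↔E₅, E₄↔E₆ and fixing H_q, H_p; σ₂ the basis permutation exchanging E₁↔E₃, E₂↔E₄; σ₃ the basis permutation exchanging E₅↔E₇, E₆↔E₈. Then the composition T = σ₃ ∘ σ₂ ∘ w₃ ∘ w₁ ∘ w₂ ∘ w₀ acts on the symmetry roots as the translation ⟨−1,1,−1,1⟩: T(α₀) = α₀ − δ, T(α₁) = α₁ + δ, T(α₂) = α₂ − δ, T(α₃) = α₃ + δ. -/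
/-- The Picard lattice `Pic′` of the standard `D₅⁽¹⁾` Sakai surface: the free `ℤ`-module of
rank 10 with basis `H_q, H_p, E₁, …, E₈`. -/
abbrev Pic' : Type := Fin 10 → ℤ

/-- The `i`-th basis vector of `Pic′`. -/
def bv (i : Fin 10) : Pic' := fun j => if j = i then 1 else 0

/-- The class `H_q`. -/
def Hq : Pic' := bv 0

/-- The class `H_p`. -/
def Hp : Pic' := bv 1

/-- The class `E (k)` of the exceptional divisor `E_{k+1}` (so `E 0 = E₁`, …, `E 7 = E₈`). -/
def E (k : Fin 8) : Pic' := bv ⟨k.val + 2, by omega⟩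

/-- The intersection form on `Pic′`: `H_q•H_q = H_p•H_p = 0`, `H_q•H_p = 1`,
`H_q•E_j = H_p•E_j = 0`, `E_i•E_j = −δ_{ij}`. -/
def inter (v w : Pic') : ℤ :=
  v 0 * w 1 + v 1 * w 0 - ∑ k : Fin 8, v ⟨k.val + 2, by omega⟩ * w ⟨k.val + 2, by omega⟩

/-- The standard symmetry root basis of type `A₃⁽¹⁾`:
`α₀ = H_p−E₁−E₂`, `α₁ = H_q−E₅−E₆`, `α₂ = H_p−E₃−E₄`, `α₃ = H_q−E₇−E₈`. -/
def alpha : Fin 4 → Pic' :=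
  ![Hp - E 0 - E 1, Hq - E 4 - E 5, Hp - E 2 - E 3, Hq - E 6 - E 7]

/-- The null root `δ = α₀ + α₁ + α₂ + α₃`. -/
def nullRoot : Pic' := alpha 0 + alpha 1 + alpha 2 + alpha 3

/-- The reflection `C ↦ C + (C•r)r` in a class `r`. -/
def reflIn (r C : Pic') : Pic' := C + inter C r • r

/-- The reflection `w_i` in the symmetry root `α_i`. -/
def w (i : Fin 4) : Pic' → Pic' := reflIn (alpha i)

/-- The lattice map induced by a permutation `s` of the basis indices (for an involution `s`,
this sends the basis vector `e_i` to `e_{s i}`). -/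
def permMap (s : Fin 10 → Fin 10) (v : Pic') : Pic' := fun j => v (s j)

/-- The Dynkin diagram automorphism `σ₂`: the basis permutation exchanging `E₁↔E₃`, `E₂↔E₄`. -/
def sigma2 : Pic' → Pic' := permMap ![0, 1, 4, 5, 2, 3, 6, 7, 8, 9]

/-- The Dynkin diagram automorphism `σ₃`: the basis permutation exchanging `E₅↔E₇`, `E₆↔E₈`. -/
def sigma3 : Pic' → Pic' := permMap ![0, 1, 2, 3, 4, 5, 8, 9, 6, 7]

/-- The Dynkin diagram automorphism `σ₁ = π₁ ∘ w_ρ`, where `ρ = H_q − H_p` and `π₁` is the basis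
permutation exchanging `E₁↔E₇`, `E₂↔E₈`, `E₃↔E₅`, `E₄↔E₆`. -/
def sigma1 : Pic' → Pic' := fun v =>
  permMap ![0, 1, 8, 9, 6, 7, 4, 5, 2, 3] (reflIn (Hq - Hp) v)

/-- The composition `T = σ₃ ∘ σ₂ ∘ w₃ ∘ w₁ ∘ w₂ ∘ w₀` (the decomposition of the
standard KNY discrete Painlevé equation on the `D₅⁽¹⁾` surface) acts on the symmetry roots as the
translation `⟨−1,1,−1,1⟩`. -/
theorem KNY_translation_on_symmetry_roots :
    let T : Pic' → Pic' := fun v => sigma3 (sigma2 (w 3 (w 1 (w 2 (w 0 v)))))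
    T (alpha 0) = alpha 0 - nullRoot ∧ T (alpha 1) = alpha 1 + nullRoot ∧
      T (alpha 2) = alpha 2 - nullRoot ∧ T (alpha 3) = alpha 3 + nullRoot := by
  refine ⟨?_, ?_, ?_, ?_⟩ <;> funext j <;> fin_cases j <;> decide
end

section
/- In Pic′ define the symmetry roots α₀ = H_p−E₁−E₂, α₁ = H_q−E₅−E₆, α₂ = H_p−E₃−E₄, α₃ = H_q−E₇−E₈, δ = α₀+α₁+α₂+α₃, the reflections w_i(C) = C + (C•α_i)α_i for i = 0,1,2,3, and the lattice automorphisms σ₂, σ₃ given by the basis permutations exchanging E₁↔E₃, E₂↔E₄ (for σ₂) and E₅↔E₇, E₆↔E₈ (for σ₃). Then the composition U = σ₃ ∘ σ₂ ∘ w₁ ∘ w₂ ∘ w₀ ∘ w₁ acts on the symmetry roots as the translation ⟨0,−1,0,1⟩: U(α₀) = α₀, U(α₁) = α₁ − δ, U(α₂) = α₂, U(α₃) = α₃ + δ. -/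
/-- The composition `U = σ₃ ∘ σ₂ ∘ w₁ ∘ w₂ ∘ w₀ ∘ w₁` (the decomposition of the
map induced by the Laguerre-weight recurrence) acts on the symmetry roots as the translation
`⟨0,−1,0,1⟩`. -/
theorem laguerre_translation_on_symmetry_roots :
    let U : Pic' → Pic' := fun v => sigma3 (sigma2 (w 1 (w 2 (w 0 (w 1 v)))))
    U (alpha 0) = alpha 0 ∧ U (alpha 1) = alpha 1 - nullRoot ∧
      U (alpha 2) = alpha 2 ∧ U (alpha 3) = alpha 3 + nullRoot := by
  decide
end

section
/- In Pic′ define the symmetry roots α₀ = H_p−E₁−E₂, α₁ = H_q−E₅−E₆, α₂ = H_p−E₃−E₄, α₃ = H_q−E₇−E₈, the reflections w_i(C) = C + (C•α_i)α_i for i = 0,1,2,3, and the lattice automorphisms σ₂, σ₃ given by the basis permutations exchanging E₁↔E₃, E₂↔E₄ (for σ₂) and E₅↔E₇, E₆↔E₈ (for σ₃). Then: (i) w₁ ∘ σ₃ ∘ σ₂ = σ₃ ∘ σ₂ ∘ w₃ as maps Pic′ → Pic′; and (ii) consequently σ₃ ∘ σ₂ ∘ w₁ ∘ w₂ ∘ w₀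 ∘ w₁ = w₁ ∘ (σ₃ ∘ σ₂ ∘ w₃ ∘ w₁ ∘ w₂ ∘ w₀) ∘ w₁, i.e., the Laguerre translation word ψ is the conjugate by w₁ of the standard KNY translation word φ. -/
section AuxConsVal
open Matrix
variable {α : Type*} {m : ℕ}

@[simp] lemma cons_val_five' (x : α) (u : Fin m.succ.succ.succ.succ.succ → α) :
    vecCons x u 5 = vecHead (vecTail (vecTail (vecTail (vecTail u)))) := rfl

@[simp] lemma cons_val_six' (x : α) (u : Fin m.succ.succ.succ.succ.succ.succ → α) :
    vecCons x u 6 = vecHead (vecTail (vecTail (vecTail (vecTail (vecTail u))))) := rfl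

@[simp] lemma cons_val_seven' (x : α) (u : Fin m.succ.succ.succ.succ.succ.succ.succ → α) :
    vecCons x u 7 = vecHead (vecTail (vecTail (vecTail (vecTail (vecTail (vecTail u)))))) := rfl

@[simp] lemma cons_val_eight' (x : α) (u : Fin m.succ.succ.succ.succ.succ.succ.succ.succ → α) :
    vecCons x u 8 =
      vecHead (vecTail (vecTail (vecTail (vecTail (vecTail (vecTail (vecTail u))))))) := rfl

@[simp] lemma cons_val_nine' (x : α)
    (u : Fin m.succ.succ.succ.succ.succ.succ.succ.succ.succ → α) :
    vecCons x u 9 =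
      vecHead (vecTail (vecTail (vecTail (vecTail (vecTail (vecTail (vecTail (vecTail u)))))))) :=
  rfl

end AuxConsVal

/-- (i) `w₁ ∘ σ₃ ∘ σ₂ = σ₃ ∘ σ₂ ∘ w₃` on `Pic′`, and consequently (ii) the
Laguerre translation word `ψ = σ₃σ₂w₁w₂w₀w₁` is the conjugate by `w₁` of the standard KNY
translation word `φ = σ₃σ₂w₃w₁w₂w₀`. -/
theorem laguerre_word_is_conjugate_of_KNY_word :
    (∀ C : Pic', w 1 (sigma3 (sigma2 C)) = sigma3 (sigma2 (w 3 C))) ∧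
    (∀ C : Pic',
      sigma3 (sigma2 (w 1 (w 2 (w 0 (w 1 C)))))
        = w 1 (sigma3 (sigma2 (w 3 (w 1 (w 2 (w 0 (w 1 C)))))))) := by
  have a1 : alpha 1 = ![1,0,0,0,0,0,-1,-1,0,0] := by decide
  have a3 : alpha 3 = ![1,0,0,0,0,0,0,0,-1,-1] := by decide
  have wap : ∀ i (C : Pic') j, w i C j = C j + inter C (alpha i) * alpha i j := by
    intro i C j; rfl
  have hperm : ∀ j : Fin 10, (![0, 1, 4, 5, 2, 3, 6, 7, 8, 9] (![0, 1, 2, 3, 4, 5, 8, 9, 6, 7] j) : Fin 10) = ![0, 1, 2, 3, 4, 5, 8, 9, 6, 7] (![0, 1, 4, 5, 2, 3, 6, 7, 8, 9] j) := by decide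
  have hal : ∀ j : Fin 10, alpha 3 (![0, 1, 2, 3, 4, 5, 8, 9, 6, 7] (![0, 1, 4, 5, 2, 3, 6, 7, 8, 9] j : Fin 10)) = alpha 1 j := by decide
  have h1' : ∀ C : Pic', w 1 (sigma3 (sigma2 C)) = sigma3 (sigma2 (w 3 C)) := by
    intro C
    have hint : inter (sigma3 (sigma2 C)) (alpha 1) = inter C (alpha 3) := by
      simp [inter, sigma2, sigma3, permMap, a1, a3, Fin.sum_univ_eight]
    funext j
    rw [wap, hint]
    have hs : sigma3 (sigma2 (w 3 C)) j = sigma3 (sigma2 C) j + inter C (alpha 3) * alpha 3 (![0, 1, 2, 3, 4, 5, 8, 9, 6, 7] (![0, 1, 4, 5, 2, 3, 6, 7, 8, 9] j : Fin 10)) := by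
      show w 3 C (![0, 1, 4, 5, 2, 3, 6, 7, 8, 9] (![0, 1, 2, 3, 4, 5, 8, 9, 6, 7] j)) = _
      rw [wap, show alpha 3 (![0, 1, 4, 5, 2, 3, 6, 7, 8, 9] (![0, 1, 2, 3, 4, 5, 8, 9, 6, 7] j) : Fin 10) = alpha 3 (![0, 1, 2, 3, 4, 5, 8, 9, 6, 7] (![0, 1, 4, 5, 2, 3, 6, 7, 8, 9] j) : Fin 10) from congrArg _ (hperm j)]
      rfl
    rw [hs, hal j]
  have h2 : ∀ C : Pic', w 1 (w 1 C) = C := by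
    intro C
    have hi : inter (w 1 C) (alpha 1) = - inter C (alpha 1) := by
      simp only [wap, inter, a1, Fin.sum_univ_eight]
      simp
      ring
    funext j
    rw [wap, hi, wap, a1]
    fin_cases j <;> simp
  exact ⟨h1', fun C => by rw [← h1', h2]⟩
end
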